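/- Let G be a finite graph and X a finite-dimensional real normed space. The rigidity map f_G : X^{V(G)} → ℝ^{E(G)}, p ↦ (‖p_v − p_w‖)_{vw ∈ E(G)}, is differentiable at p if and only if p_v − p_w is a smooth point of X for every edge vw ∈ E(G); in that case its derivative sends x to (φ_{v,w}(x_v − x_w))_{vw ∈ E(G)}, where φ_{v,w} is the support functional of the unit vector (p_v − p_w)/‖p_v − p_w‖. -/

import Mathlib

lemma fderiv_norm_eq_support {X : Type*} [NormedAddCommGroup X] [NormedSpace ℝ X]
    (y : X) (φ : X →L[ℝ] ℝ) (hφ : ∀ w, φ w ≤ ‖w‖)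
    (hd : DifferentiableAt ℝ (fun x : X => ‖x‖) y) (hφy : φ y = ‖y‖) :
    fderiv ℝ (fun x : X => ‖x‖) y = φ := by
  ext z
  set g := fderiv ℝ (fun x : X => ‖x‖) y with hg
  have hline : HasDerivAt (fun t : ℝ => y + t • z) z 0 := by
    simpa using ((hasDerivAt_id (0:ℝ)).smul_const z).const_add y
  have hy0 : y + (0:ℝ) • z = y := by simp
  have hnorm : HasDerivAt (fun t : ℝ => ‖y + t • z‖) (g z) 0 := by
    have := (hy0 ▸ hd.hasFDerivAt).comp_hasDerivAt 0 hline
    simpa [Function.comp_def] using this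
  have hφline : HasDerivAt (fun t : ℝ => φ (y + t • z)) (φ z) 0 := by
    have := φ.hasFDerivAt.comp_hasDerivAt 0 hline
    simpa [Function.comp_def] using this
  have hsub : HasDerivAt (fun t : ℝ => ‖y + t • z‖ - φ (y + t • z)) (g z - φ z) 0 :=
    hnorm.sub hφline
  have hmin : IsLocalMin (fun t : ℝ => ‖y + t • z‖ - φ (y + t • z)) 0 := by
    apply Filter.Eventually.of_forall
    intro t
    simp only [hy0, hφy, sub_self]
    linarith [hφ (y + t • z)]
  have := hmin.deriv_eq_zero
  rw [hsub.deriv] at this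
  linarith

/-- reverse direction: differentiability of all edge norms gives `HasFDerivAt` of the
rigidity map. -/
lemma rigidity_hasFDerivAt {X : Type*} [NormedAddCommGroup X] [NormedSpace ℝ X]
    {V : Type*} [Fintype V] {E : Finset (V × V)} (p : V → X)
    (h : ∀ e ∈ E, DifferentiableAt ℝ (fun x : X => ‖x‖) (p e.1 - p e.2)) :
    HasFDerivAt (fun q : V → X => fun e : ↥E => ‖q e.val.1 - q e.val.2‖)
      (ContinuousLinearMap.pi (fun e : ↥E =>
        (fderiv ℝ (fun x : X => ‖x‖) (p e.val.1 - p e.val.2)).comp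
          ((ContinuousLinearMap.proj e.val.1 : (V → X) →L[ℝ] X)
            - ContinuousLinearMap.proj e.val.2))) p := by
  apply hasFDerivAt_pi.2
  intro e
  have hL : HasFDerivAt (fun q : V → X => q e.val.1 - q e.val.2)
      ((ContinuousLinearMap.proj e.val.1 : (V → X) →L[ℝ] X)
        - ContinuousLinearMap.proj e.val.2) p :=
    ((ContinuousLinearMap.proj e.val.1 : (V → X) →L[ℝ] X)
        - ContinuousLinearMap.proj e.val.2).hasFDerivAt
  have := ((h e.val e.prop).hasFDerivAt).comp p hL
  simpa [Function.comp_def] using this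

theorem stmt_13 (X : Type*) [NormedAddCommGroup X] [NormedSpace ℝ X]
    [FiniteDimensional ℝ X] (V : Type*) [Fintype V]
    (E : Finset (V × V)) (hE : ∀ e ∈ E, e.1 ≠ e.2) (p : V → X) :
    (DifferentiableAt ℝ (fun q : V → X => fun e : ↥E => ‖q e.val.1 - q e.val.2‖) p ↔
      ∀ e ∈ E, DifferentiableAt ℝ (fun x : X => ‖x‖) (p e.1 - p e.2)) ∧
    ((∀ e ∈ E, DifferentiableAt ℝ (fun x : X => ‖x‖) (p e.1 - p e.2)) →
      ∀ φ : ↥E → (X →L[ℝ] ℝ),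
        (∀ e : ↥E, ‖φ e‖ = 1 ∧ φ e (p e.val.1 - p e.val.2) = ‖p e.val.1 - p e.val.2‖) →
        ∀ x : V → X,
          fderiv ℝ (fun q : V → X => fun e : ↥E => ‖q e.val.1 - q e.val.2‖) p x
            = fun e : ↥E => φ e (x e.val.1 - x e.val.2)) := by
  classical
  constructor
  · constructor
    · intro hF e he
      set y0 : X := p e.1 - p e.2 with hy0
      set B : X → (V → X) := fun y v => p v + (if v = e.1 then y - y0 else 0) with hB
      have hBd : DifferentiableAt ℝ B y0 := by
        apply differentiableAt_pi.mpr
        intro v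
        by_cases hv : v = e.1 <;> simp [hB, hv]
      have hev : DifferentiableAt ℝ
          (fun q : V → X => ‖q e.1 - q e.2‖) p := by
        have := differentiableAt_pi.mp hF (⟨e, he⟩ : ↥E)
        simpa using this
      have hBp : B y0 = p := by
        funext v; simp [hB]
      have hev' : DifferentiableAt ℝ (fun q : V → X => ‖q e.1 - q e.2‖) (B y0) :=
        hBp ▸ hev
      have hcomp := hev'.comp y0 hBd
      have hkey : (fun y => ‖B y e.1 - B y e.2‖) = fun y : X => ‖y‖ := by
        funext y
        have hne : e.2 ≠ e.1 := (hE e he).symm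
        simp [hB, hne, hy0]
        congr 1
        abel
      rw [show ((fun q : V → X => ‖q e.1 - q e.2‖) ∘ B) = fun y : X => ‖y‖ from hkey] at hcomp
      exact hcomp
    · intro h
      exact (rigidity_hasFDerivAt p h).differentiableAt
  · intro h φ hφ x
    have hfd := (rigidity_hasFDerivAt p h).fderiv
    rw [hfd]
    funext e
    have h1 : ∀ w, φ e w ≤ ‖w‖ := fun w => by
      calc φ e w ≤ ‖φ e w‖ := le_abs_self _
        _ ≤ ‖φ e‖ * ‖w‖ := (φ e).le_opNorm w
        _ = ‖w‖ := by rw [(hφ e).1, one_mul]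
    have h2 := fderiv_norm_eq_support (p e.val.1 - p e.val.2) (φ e) h1
      (h e.val e.prop) (hφ e).2
    simp [ContinuousLinearMap.pi_apply, h2]
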